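/- Let H be an FH-algebra over a commutative ring k with antipode S, right distinguished group-like element m ∈ H* (the right modular function) and right distinguished group-like element b ∈ H. Then for every a ∈ H, S⁴(a) = b (m^{-1} ⇀ a ↼ m) b^{-1}. -/

import Mathlib

open TensorProduct

/-- `(φ, x, y)` is a Frobenius system for the `k`-algebra `A`. -/
def IsFrobeniusSystem (k : Type*) [CommRing k] (A : Type*) [Ring A] [Algebra k A]
    (φ : A →ₗ[k] k) {n : ℕ} (x y : Fin n → A) : Prop :=
  ∀ a : A, (∑ i, φ (y i * a) • x i = a) ∧ (∑ i, φ (a * x i) • y i = a)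

/-- The convolution product on the dual `H*`: `(conv f g) a = ∑ f(a₁) g(a₂)`. -/
noncomputable def conv (k : Type*) [CommRing k] (H : Type*) [AddCommGroup H] [Module k H]
    [Coalgebra k H] (f g : H →ₗ[k] k) : H →ₗ[k] k :=
  (LinearMap.mul' k k) ∘ₗ (TensorProduct.map f g) ∘ₗ (Coalgebra.comul (R := k))

/-- The right action of `H*` on `H`: `a ↼ g = ∑ g(a₁) a₂`. -/
noncomputable def rAct (k : Type*) [CommRing k] (H : Type*) [AddCommGroup H] [Module k H]
    [Coalgebra k H] (g : H →ₗ[k] k) (a : H) : H :=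
  (TensorProduct.lid k H) ((TensorProduct.map g LinearMap.id) (Coalgebra.comul (R := k) a))

/-- The left action of `H*` on `H`: `g ⇀ a = ∑ a₁ g(a₂)`. -/
noncomputable def lAct (k : Type*) [CommRing k] (H : Type*) [AddCommGroup H] [Module k H]
    [Coalgebra k H] (g : H →ₗ[k] k) (a : H) : H :=
  (TensorProduct.rid k H) ((TensorProduct.map LinearMap.id g) (Coalgebra.comul (R := k) a))

section RadfordHelpers

open Coalgebra HopfAlgebra

variable {k : Type*} [CommRing k] {H : Type*} [Ring H] [HopfAlgebra k H]

noncomputable def Radford.mulRepr {u v : H} {ι κ : Type*} (ru : Coalgebra.Repr k u ι)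
    (rv : Coalgebra.Repr k v κ) : Coalgebra.Repr k (u * v) (ι × κ) where
  index := ru.index ×ˢ rv.index
  left p := ru.left p.1 * rv.left p.2
  right p := ru.right p.1 * rv.right p.2
  eq := by
    rw [Bialgebra.comul_mul, ← ru.eq, ← rv.eq, Finset.sum_mul_sum, Finset.sum_product]
    simp [Algebra.TensorProduct.tmul_mul_tmul]

lemma Radford.sum_counit_smul_left {a : H} {ι : Type*} (r : Coalgebra.Repr k a ι) :
    ∑ i ∈ r.index, Coalgebra.counit (R := k) (r.right i) • r.left i = a := by
  have h := congrArg (TensorProduct.rid k H) (Coalgebra.sum_tmul_counit_eq (R := k) r)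
  simpa only [map_sum, TensorProduct.rid_tmul, one_smul] using h

lemma Radford.triple_eq {M : Type*} [AddCommGroup M] [Module k M] {a : H} {ι κ Λ : Type*}
    (r : Coalgebra.Repr k a ι)
    (r1 : (i : ι) → Coalgebra.Repr k (r.left i) κ)
    (r2 : (i : ι) → Coalgebra.Repr k (r.right i) Λ)
    (F : H ⊗[k] (H ⊗[k] H) →ₗ[k] M) :
    ∑ i ∈ r.index, ∑ j ∈ (r1 i).index,
      F ((r1 i).left j ⊗ₜ[k] ((r1 i).right j ⊗ₜ[k] r.right i)) =
    ∑ i ∈ r.index, ∑ j ∈ (r2 i).index,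
      F (r.left i ⊗ₜ[k] ((r2 i).left j ⊗ₜ[k] (r2 i).right j)) := by
  have h := congrArg F (Coalgebra.sum_tmul_tmul_eq (R := k) r r1 r2)
  simpa only [map_sum] using h

noncomputable def Radford.F1 (f : H →ₗ[k] k) (c d : H) : H ⊗[k] (H ⊗[k] H) →ₗ[k] H :=
  (TensorProduct.lid k H).toLinearMap ∘ₗ
    TensorProduct.map (f ∘ₗ LinearMap.mulLeft k c)
      ((LinearMap.mulLeft k d) ∘ₗ (LinearMap.mul' k H) ∘ₗ
        TensorProduct.map LinearMap.id (HopfAlgebra.antipode (R := k)))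

lemma Radford.mulRepr_sum {u v : H} {ι κ : Type*} (ru : Coalgebra.Repr k u ι) (rv : Coalgebra.Repr k v κ)
    {M : Type*} [AddCommMonoid M] (F : H → H → M) :
    ∑ p ∈ (Radford.mulRepr ru rv).index,
        F ((Radford.mulRepr ru rv).left p) ((Radford.mulRepr ru rv).right p)
      = ∑ i ∈ ru.index, ∑ j ∈ rv.index, F (ru.left i * rv.left j) (ru.right i * rv.right j) := by
  unfold Radford.mulRepr
  exact Finset.sum_product _ _ _

lemma Radford.hriE (f : H →ₗ[k] k)
    (hri : ∀ a : H,
      (TensorProduct.lid k H) ((TensorProduct.map f LinearMap.id) (Coalgebra.comul (R := k) a))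
        = f a • (1 : H))
    (a : H) {ι : Type*} (r : Coalgebra.Repr k a ι) :
    ∑ i ∈ r.index, f (r.left i) • r.right i = f a • (1 : H) := by
  have h := hri a
  rw [← r.eq] at h
  simpa only [map_sum, TensorProduct.map_tmul, TensorProduct.lid_tmul, LinearMap.id_coe,
    id_eq] using h

lemma Radford.F1_apply (f : H →ₗ[k] k) (c d u v w : H) :
    Radford.F1 f c d (u ⊗ₜ[k] (v ⊗ₜ[k] w)) =
      f (c * u) • (d * (v * HopfAlgebra.antipode (R := k) w)) := by
  simp [Radford.F1]

lemma Radford.lemA (f : H →ₗ[k] k)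
    (hri : ∀ a : H,
      (TensorProduct.lid k H) ((TensorProduct.map f LinearMap.id) (Coalgebra.comul (R := k) a))
        = f a • (1 : H))
    (xx yy : H) {ι κ : Type*} (rx : Coalgebra.Repr k xx ι) (ry : Coalgebra.Repr k yy κ) :
    ∑ i ∈ rx.index, f (rx.left i * yy) • rx.right i
      = ∑ j ∈ ry.index, f (xx * ry.left j) • HopfAlgebra.antipode (R := k) (ry.right j) := by
  classical
  set ry1 : (j : κ) → Coalgebra.Repr k (ry.left j) (H × H) :=
    fun j => Coalgebra.Repr.arbitrary k (ry.left j) with hry1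
  set ry2 : (j : κ) → Coalgebra.Repr k (ry.right j) (H × H) :=
    fun j => Coalgebra.Repr.arbitrary k (ry.right j) with hry2
  have etrans : ∑ i ∈ rx.index, ∑ j ∈ ry.index, ∑ p ∈ (ry1 j).index,
      Radford.F1 f (rx.left i) (rx.right i)
        ((ry1 j).left p ⊗ₜ[k] ((ry1 j).right p ⊗ₜ[k] ry.right j)) =
      ∑ i ∈ rx.index, ∑ j ∈ ry.index, ∑ p ∈ (ry2 j).index,
      Radford.F1 f (rx.left i) (rx.right i)
        (ry.left j ⊗ₜ[k] ((ry2 j).left p ⊗ₜ[k] (ry2 j).right p)) :=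
    Finset.sum_congr rfl fun i _ =>
      Radford.triple_eq ry ry1 ry2 (Radford.F1 f (rx.left i) (rx.right i))
  have e2 : ∑ i ∈ rx.index, ∑ j ∈ ry.index, ∑ p ∈ (ry1 j).index,
      Radford.F1 f (rx.left i) (rx.right i)
        ((ry1 j).left p ⊗ₜ[k] ((ry1 j).right p ⊗ₜ[k] ry.right j)) =
      ∑ j ∈ ry.index, f (xx * ry.left j) • HopfAlgebra.antipode (R := k) (ry.right j) := by
    rw [Finset.sum_comm]
    refine Finset.sum_congr rfl fun j _ => ?_
    have collapse : ∑ i ∈ rx.index, ∑ p ∈ (ry1 j).index,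
        f (rx.left i * (ry1 j).left p) • (rx.right i * (ry1 j).right p)
          = f (xx * ry.left j) • (1 : H) :=
      (Radford.mulRepr_sum rx (ry1 j) (fun l r => f l • r)).symm.trans
        (Radford.hriE f hri (xx * ry.left j) (Radford.mulRepr rx (ry1 j)))
    calc ∑ i ∈ rx.index, ∑ p ∈ (ry1 j).index,
        Radford.F1 f (rx.left i) (rx.right i)
          ((ry1 j).left p ⊗ₜ[k] ((ry1 j).right p ⊗ₜ[k] ry.right j))
        = ∑ i ∈ rx.index, ∑ p ∈ (ry1 j).index,
          (f (rx.left i * (ry1 j).left p) • (rx.right i * (ry1 j).right p)) *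
            HopfAlgebra.antipode (R := k) (ry.right j) := by
          refine Finset.sum_congr rfl fun i _ => Finset.sum_congr rfl fun p _ => ?_
          rw [Radford.F1_apply, ← mul_assoc, ← smul_mul_assoc]
      _ = (∑ i ∈ rx.index, ∑ p ∈ (ry1 j).index,
            f (rx.left i * (ry1 j).left p) • (rx.right i * (ry1 j).right p)) *
            HopfAlgebra.antipode (R := k) (ry.right j) := by
          simp only [← Finset.sum_mul]
      _ = (f (xx * ry.left j) • (1 : H)) * HopfAlgebra.antipode (R := k) (ry.right j) := by
          rw [collapse]
      _ = f (xx * ry.left j) • HopfAlgebra.antipode (R := k) (ry.right j) := by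
          rw [smul_mul_assoc, one_mul]
  have e3 : ∑ i ∈ rx.index, ∑ j ∈ ry.index, ∑ p ∈ (ry2 j).index,
      Radford.F1 f (rx.left i) (rx.right i)
        (ry.left j ⊗ₜ[k] ((ry2 j).left p ⊗ₜ[k] (ry2 j).right p)) =
      ∑ i ∈ rx.index, f (rx.left i * yy) • rx.right i := by
    refine Finset.sum_congr rfl fun i _ => ?_
    have hj : ∀ j ∈ ry.index, ∑ p ∈ (ry2 j).index,
        Radford.F1 f (rx.left i) (rx.right i)
          (ry.left j ⊗ₜ[k] ((ry2 j).left p ⊗ₜ[k] (ry2 j).right p)) =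
        (Coalgebra.counit (R := k) (ry.right j) * f (rx.left i * ry.left j)) • rx.right i := by
      intro j _
      simp only [Radford.F1_apply]
      rw [← Finset.smul_sum, ← Finset.mul_sum, HopfAlgebra.sum_mul_antipode_eq_smul (ry2 j),
        mul_smul_comm, mul_one, smul_smul, mul_comm (f (rx.left i * ry.left j))]
    rw [Finset.sum_congr rfl hj, ← Finset.sum_smul]
    congr 1
    conv_rhs => rw [← Radford.sum_counit_smul_left ry]
    rw [Finset.mul_sum, map_sum]
    refine Finset.sum_congr rfl fun j _ => ?_
    rw [mul_smul_comm, map_smul, smul_eq_mul]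
  rw [← e3, ← etrans, e2]

lemma Radford.sum_counit_smul_right {a : H} {ι : Type*} (r : Coalgebra.Repr k a ι) :
    ∑ i ∈ r.index, Coalgebra.counit (R := k) (r.left i) • r.right i = a := by
  have h := congrArg (TensorProduct.lid k H) (Coalgebra.sum_counit_tmul_eq (R := k) r)
  simpa only [map_sum, TensorProduct.lid_tmul, one_smul] using h

noncomputable def Radford.F2 (f : H →ₗ[k] k) (c d : H) : H ⊗[k] (H ⊗[k] H) →ₗ[k] H :=
  (LinearMap.mul' k H) ∘ₗ
    TensorProduct.map (HopfAlgebra.antipode (R := k))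
      ((TensorProduct.rid k H).toLinearMap ∘ₗ
        TensorProduct.map (LinearMap.mulRight k d) (f ∘ₗ LinearMap.mulRight k c))

lemma Radford.F2_apply (f : H →ₗ[k] k) (c d u v w : H) :
    Radford.F2 f c d (u ⊗ₜ[k] (v ⊗ₜ[k] w)) =
      f (w * c) • (HopfAlgebra.antipode (R := k) u * (v * d)) := by
  simp [Radford.F2, TensorProduct.rid_tmul, mul_smul_comm]

lemma Radford.hCE (f : H →ₗ[k] k) (b : H)
    (sepR : ∀ {c c' : H}, (∀ z, f (z * c) = f (z * c')) → c = c')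
    (hbdist : ∀ (g : H →ₗ[k] k) (c : H), (conv k H g f) c = g b * f c)
    (c : H) {ι : Type*} (r : Coalgebra.Repr k c ι) :
    ∑ i ∈ r.index, f (r.right i) • r.left i = f c • b := by
  apply sepR
  intro z
  have h1 : f (z * ∑ i ∈ r.index, f (r.right i) • r.left i)
      = ∑ i ∈ r.index, f (z * r.left i) * f (r.right i) := by
    rw [Finset.mul_sum, map_sum]
    refine Finset.sum_congr rfl fun i _ => ?_
    rw [mul_smul_comm, map_smul, smul_eq_mul, mul_comm]
  have h2 : conv k H (f ∘ₗ LinearMap.mulLeft k z) f c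
      = ∑ i ∈ r.index, f (z * r.left i) * f (r.right i) := by
    show (LinearMap.mul' k k) ((TensorProduct.map (f ∘ₗ LinearMap.mulLeft k z) f)
      (Coalgebra.comul (R := k) c)) = _
    rw [← r.eq]
    simp only [map_sum, TensorProduct.map_tmul, LinearMap.mul'_apply, LinearMap.coe_comp,
      Function.comp_apply, LinearMap.mulLeft_apply]
  rw [h1, ← h2, hbdist]
  simp only [LinearMap.coe_comp, Function.comp_apply, LinearMap.mulLeft_apply]
  rw [mul_smul_comm, map_smul, smul_eq_mul, mul_comm]

lemma Radford.lemD (f : H →ₗ[k] k) (b : H)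
    (sepR : ∀ {c c' : H}, (∀ z, f (z * c) = f (z * c')) → c = c')
    (hbdist : ∀ (g : H →ₗ[k] k) (c : H), (conv k H g f) c = g b * f c)
    (xx yy : H) {ι κ : Type*} (rx : Coalgebra.Repr k xx ι) (ry : Coalgebra.Repr k yy κ) :
    ∑ j ∈ ry.index, f (xx * ry.right j) • ry.left j
      = (∑ i ∈ rx.index, f (rx.right i * yy) • HopfAlgebra.antipode (R := k) (rx.left i)) * b := by
  classical
  set rx1 : (i : ι) → Coalgebra.Repr k (rx.left i) (H × H) :=
    fun i => Coalgebra.Repr.arbitrary k (rx.left i) with hrx1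
  set rx2 : (i : ι) → Coalgebra.Repr k (rx.right i) (H × H) :=
    fun i => Coalgebra.Repr.arbitrary k (rx.right i) with hrx2
  have etrans : ∑ j ∈ ry.index, ∑ i ∈ rx.index, ∑ p ∈ (rx1 i).index,
      Radford.F2 f (ry.right j) (ry.left j)
        ((rx1 i).left p ⊗ₜ[k] ((rx1 i).right p ⊗ₜ[k] rx.right i)) =
      ∑ j ∈ ry.index, ∑ i ∈ rx.index, ∑ p ∈ (rx2 i).index,
      Radford.F2 f (ry.right j) (ry.left j)
        (rx.left i ⊗ₜ[k] ((rx2 i).left p ⊗ₜ[k] (rx2 i).right p)) :=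
    Finset.sum_congr rfl fun j _ =>
      Radford.triple_eq rx rx1 rx2 (Radford.F2 f (ry.right j) (ry.left j))
  have e1 : ∑ j ∈ ry.index, ∑ i ∈ rx.index, ∑ p ∈ (rx1 i).index,
      Radford.F2 f (ry.right j) (ry.left j)
        ((rx1 i).left p ⊗ₜ[k] ((rx1 i).right p ⊗ₜ[k] rx.right i)) =
      ∑ j ∈ ry.index, f (xx * ry.right j) • ry.left j := by
    refine Finset.sum_congr rfl fun j _ => ?_
    have hi : ∀ i ∈ rx.index, ∑ p ∈ (rx1 i).index,
        Radford.F2 f (ry.right j) (ry.left j)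
          ((rx1 i).left p ⊗ₜ[k] ((rx1 i).right p ⊗ₜ[k] rx.right i)) =
        (Coalgebra.counit (R := k) (rx.left i) * f (rx.right i * ry.right j)) • ry.left j := by
      intro i _
      simp only [Radford.F2_apply]
      have hterm : ∀ p ∈ (rx1 i).index,
          f (rx.right i * ry.right j) •
            (HopfAlgebra.antipode (R := k) ((rx1 i).left p) * ((rx1 i).right p * ry.left j)) =
          f (rx.right i * ry.right j) •
            ((HopfAlgebra.antipode (R := k) ((rx1 i).left p) * (rx1 i).right p) * ry.left j) := by
        intro p _
        rw [mul_assoc]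
      rw [Finset.sum_congr rfl hterm, ← Finset.smul_sum, ← Finset.sum_mul,
        HopfAlgebra.sum_antipode_mul_eq_smul (rx1 i), smul_mul_assoc, one_mul, smul_smul,
        mul_comm (f (rx.right i * ry.right j))]
    rw [Finset.sum_congr rfl hi, ← Finset.sum_smul]
    congr 1
    conv_rhs => rw [← Radford.sum_counit_smul_right rx]
    rw [Finset.sum_mul, map_sum]
    refine Finset.sum_congr rfl fun i _ => ?_
    rw [smul_mul_assoc, map_smul, smul_eq_mul]
  have e2 : ∑ j ∈ ry.index, ∑ i ∈ rx.index, ∑ p ∈ (rx2 i).index,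
      Radford.F2 f (ry.right j) (ry.left j)
        (rx.left i ⊗ₜ[k] ((rx2 i).left p ⊗ₜ[k] (rx2 i).right p)) =
      (∑ i ∈ rx.index, f (rx.right i * yy) • HopfAlgebra.antipode (R := k) (rx.left i)) * b := by
    rw [Finset.sum_comm, Finset.sum_mul]
    refine Finset.sum_congr rfl fun i _ => ?_
    have collapse : ∑ p ∈ (rx2 i).index, ∑ j ∈ ry.index,
        f ((rx2 i).right p * ry.right j) • ((rx2 i).left p * ry.left j)
          = f (rx.right i * yy) • b :=
      (Radford.mulRepr_sum (rx2 i) ry (fun l r => f r • l)).symm.trans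
        (Radford.hCE f b sepR hbdist (rx.right i * yy) (Radford.mulRepr (rx2 i) ry))
    calc ∑ j ∈ ry.index, ∑ p ∈ (rx2 i).index,
        Radford.F2 f (ry.right j) (ry.left j)
          (rx.left i ⊗ₜ[k] ((rx2 i).left p ⊗ₜ[k] (rx2 i).right p))
        = ∑ j ∈ ry.index, ∑ p ∈ (rx2 i).index,
          HopfAlgebra.antipode (R := k) (rx.left i) *
            (f ((rx2 i).right p * ry.right j) • ((rx2 i).left p * ry.left j)) := by
          refine Finset.sum_congr rfl fun j _ => Finset.sum_congr rfl fun p _ => ?_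
          rw [Radford.F2_apply, mul_smul_comm]
      _ = HopfAlgebra.antipode (R := k) (rx.left i) *
            ∑ p ∈ (rx2 i).index, ∑ j ∈ ry.index,
              f ((rx2 i).right p * ry.right j) • ((rx2 i).left p * ry.left j) := by
          rw [Finset.sum_comm]
          simp only [← Finset.mul_sum]
      _ = HopfAlgebra.antipode (R := k) (rx.left i) * (f (rx.right i * yy) • b) := by
          rw [collapse]
      _ = (f (rx.right i * yy) • HopfAlgebra.antipode (R := k) (rx.left i)) * b := by
          rw [mul_smul_comm, smul_mul_assoc]
  rw [← e1, etrans, e2]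

noncomputable def Radford.glRepr {c : H} (hgl : Coalgebra.comul (R := k) c = c ⊗ₜ[k] c) :
    Coalgebra.Repr k c Unit where
  index := {()}
  left _ := c
  right _ := c
  eq := by simpa using hgl.symm

noncomputable def Radford.F6 (γ β γ' : H →ₗ[k] H) : H ⊗[k] (H ⊗[k] H) →ₗ[k] H :=
  (LinearMap.mul' k H) ∘ₗ
    TensorProduct.map γ ((LinearMap.mul' k H) ∘ₗ TensorProduct.map β γ')

lemma Radford.F6_apply (γ β γ' : H →ₗ[k] H) (u v w : H) :
    Radford.F6 γ β γ' (u ⊗ₜ[k] (v ⊗ₜ[k] w)) = γ u * (β v * γ' w) := by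
  simp [Radford.F6]

lemma Radford.lem21a (b binv : H) (hb1 : b * binv = 1)
    (hbgl : Coalgebra.comul (R := k) b = b ⊗ₜ[k] b)
    (hbcu : Coalgebra.counit (R := k) b = 1) (a : H) :
    HopfAlgebra.antipode (R := k) (a * b) = binv * HopfAlgebra.antipode (R := k) a := by
  classical
  set rv : Coalgebra.Repr k a (H × H) := Coalgebra.Repr.arbitrary k a with hrv
  set rv1 : (i : H × H) → Coalgebra.Repr k (rv.left i) (H × H) :=
    fun i => Coalgebra.Repr.arbitrary k (rv.left i) with hrv1
  set rv2 : (i : H × H) → Coalgebra.Repr k (rv.right i) (H × H) :=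
    fun i => Coalgebra.Repr.arbitrary k (rv.right i) with hrv2
  set γ : H →ₗ[k] H := HopfAlgebra.antipode (R := k) ∘ₗ LinearMap.mulRight k b with hγ
  set β : H →ₗ[k] H := LinearMap.mulRight k b with hβ
  set γ' : H →ₗ[k] H := LinearMap.mulLeft k binv ∘ₗ HopfAlgebra.antipode (R := k) with hγ'
  have etrans := Radford.triple_eq rv rv1 rv2 (Radford.F6 γ β γ')
  have e1 : ∑ i ∈ rv.index, ∑ p ∈ (rv1 i).index,
      Radford.F6 γ β γ' ((rv1 i).left p ⊗ₜ[k] ((rv1 i).right p ⊗ₜ[k] rv.right i)) =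
      binv * HopfAlgebra.antipode (R := k) a := by
    have hi : ∀ i ∈ rv.index, ∑ p ∈ (rv1 i).index,
        Radford.F6 γ β γ' ((rv1 i).left p ⊗ₜ[k] ((rv1 i).right p ⊗ₜ[k] rv.right i)) =
        Coalgebra.counit (R := k) (rv.left i) • γ' (rv.right i) := by
      intro i _
      have collapse : ∑ p ∈ (rv1 i).index,
          HopfAlgebra.antipode (R := k) ((rv1 i).left p * b) * ((rv1 i).right p * b)
            = Coalgebra.counit (R := k) (rv.left i) • 1 := by
        have h := HopfAlgebra.sum_antipode_mul_eq_smul (R := k)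
          (Radford.mulRepr (rv1 i) (Radford.glRepr hbgl))
        rw [Radford.mulRepr_sum (rv1 i) (Radford.glRepr hbgl)
          (fun l r => HopfAlgebra.antipode (R := k) l * r)] at h
        simpa [Radford.glRepr, Bialgebra.counit_mul, hbcu] using h
      calc ∑ p ∈ (rv1 i).index,
          Radford.F6 γ β γ' ((rv1 i).left p ⊗ₜ[k] ((rv1 i).right p ⊗ₜ[k] rv.right i))
          = ∑ p ∈ (rv1 i).index,
            (HopfAlgebra.antipode (R := k) ((rv1 i).left p * b) * ((rv1 i).right p * b)) *
              γ' (rv.right i) := by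
            refine Finset.sum_congr rfl fun p _ => ?_
            rw [Radford.F6_apply, ← mul_assoc]
            rfl
        _ = (∑ p ∈ (rv1 i).index,
              HopfAlgebra.antipode (R := k) ((rv1 i).left p * b) * ((rv1 i).right p * b)) *
              γ' (rv.right i) := by rw [Finset.sum_mul]
        _ = Coalgebra.counit (R := k) (rv.left i) • γ' (rv.right i) := by
            rw [collapse, smul_mul_assoc, one_mul]
    rw [Finset.sum_congr rfl hi]
    calc ∑ x ∈ rv.index, Coalgebra.counit (R := k) (rv.left x) • γ' (rv.right x)
        = γ' (∑ x ∈ rv.index, Coalgebra.counit (R := k) (rv.left x) • rv.right x) := by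
          rw [map_sum]
          exact Finset.sum_congr rfl fun x _ => (map_smul γ' _ _).symm
      _ = binv * HopfAlgebra.antipode (R := k) a := by
          rw [Radford.sum_counit_smul_right rv]
          rfl
  have e2 : ∑ i ∈ rv.index, ∑ p ∈ (rv2 i).index,
      Radford.F6 γ β γ' (rv.left i ⊗ₜ[k] ((rv2 i).left p ⊗ₜ[k] (rv2 i).right p)) =
      HopfAlgebra.antipode (R := k) (a * b) := by
    have hi : ∀ i ∈ rv.index, ∑ p ∈ (rv2 i).index,
        Radford.F6 γ β γ' (rv.left i ⊗ₜ[k] ((rv2 i).left p ⊗ₜ[k] (rv2 i).right p)) =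
        Coalgebra.counit (R := k) (rv.right i) • γ (rv.left i) := by
      intro i _
      have collapse : ∑ p ∈ (rv2 i).index, β ((rv2 i).left p) * γ' ((rv2 i).right p)
          = Coalgebra.counit (R := k) (rv.right i) • 1 := by
        have h := HopfAlgebra.sum_mul_antipode_eq_smul (R := k) (rv2 i)
        calc ∑ p ∈ (rv2 i).index, β ((rv2 i).left p) * γ' ((rv2 i).right p)
            = ∑ p ∈ (rv2 i).index,
              (rv2 i).left p * HopfAlgebra.antipode (R := k) ((rv2 i).right p) := by
              refine Finset.sum_congr rfl fun p _ => ?_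
              show ((rv2 i).left p * b) * (binv * HopfAlgebra.antipode (R := k) ((rv2 i).right p)) = _
              rw [mul_assoc, ← mul_assoc b, hb1, one_mul]
          _ = Coalgebra.counit (R := k) (rv.right i) • 1 := h
      calc ∑ p ∈ (rv2 i).index,
          Radford.F6 γ β γ' (rv.left i ⊗ₜ[k] ((rv2 i).left p ⊗ₜ[k] (rv2 i).right p))
          = ∑ p ∈ (rv2 i).index, γ (rv.left i) * (β ((rv2 i).left p) * γ' ((rv2 i).right p)) := by
            refine Finset.sum_congr rfl fun p _ => ?_
            rw [Radford.F6_apply]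
        _ = γ (rv.left i) * ∑ p ∈ (rv2 i).index, β ((rv2 i).left p) * γ' ((rv2 i).right p) := by
            rw [Finset.mul_sum]
        _ = Coalgebra.counit (R := k) (rv.right i) • γ (rv.left i) := by
            rw [collapse, mul_smul_comm, mul_one]
    rw [Finset.sum_congr rfl hi]
    calc ∑ x ∈ rv.index, Coalgebra.counit (R := k) (rv.right x) • γ (rv.left x)
        = γ (∑ x ∈ rv.index, Coalgebra.counit (R := k) (rv.right x) • rv.left x) := by
          rw [map_sum]
          exact Finset.sum_congr rfl fun x _ => (map_smul γ _ _).symm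
      _ = HopfAlgebra.antipode (R := k) (a * b) := by
          rw [Radford.sum_counit_smul_left rv]
          rfl
  rw [← e2, ← etrans, e1]

lemma Radford.lem21b (b binv : H) (hb2 : binv * b = 1)
    (hbinvgl : Coalgebra.comul (R := k) binv = binv ⊗ₜ[k] binv)
    (hbinvcu : Coalgebra.counit (R := k) binv = 1) (a : H) :
    HopfAlgebra.antipode (R := k) (binv * a) = HopfAlgebra.antipode (R := k) a * b := by
  classical
  set rv : Coalgebra.Repr k a (H × H) := Coalgebra.Repr.arbitrary k a with hrv
  set rv1 : (i : H × H) → Coalgebra.Repr k (rv.left i) (H × H) :=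
    fun i => Coalgebra.Repr.arbitrary k (rv.left i) with hrv1
  set rv2 : (i : H × H) → Coalgebra.Repr k (rv.right i) (H × H) :=
    fun i => Coalgebra.Repr.arbitrary k (rv.right i) with hrv2
  set γ : H →ₗ[k] H := HopfAlgebra.antipode (R := k) ∘ₗ LinearMap.mulLeft k binv with hγ
  set β : H →ₗ[k] H := LinearMap.mulLeft k binv with hβ
  set γ' : H →ₗ[k] H := LinearMap.mulRight k b ∘ₗ HopfAlgebra.antipode (R := k) with hγ'
  have etrans := Radford.triple_eq rv rv1 rv2 (Radford.F6 γ β γ')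
  have e1 : ∑ i ∈ rv.index, ∑ p ∈ (rv1 i).index,
      Radford.F6 γ β γ' ((rv1 i).left p ⊗ₜ[k] ((rv1 i).right p ⊗ₜ[k] rv.right i)) =
      HopfAlgebra.antipode (R := k) a * b := by
    have hi : ∀ i ∈ rv.index, ∑ p ∈ (rv1 i).index,
        Radford.F6 γ β γ' ((rv1 i).left p ⊗ₜ[k] ((rv1 i).right p ⊗ₜ[k] rv.right i)) =
        Coalgebra.counit (R := k) (rv.left i) • γ' (rv.right i) := by
      intro i _
      have collapse : ∑ p ∈ (rv1 i).index,
          HopfAlgebra.antipode (R := k) (binv * (rv1 i).left p) * (binv * (rv1 i).right p)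
            = Coalgebra.counit (R := k) (rv.left i) • 1 := by
        have h := HopfAlgebra.sum_antipode_mul_eq_smul (R := k)
          (Radford.mulRepr (Radford.glRepr hbinvgl) (rv1 i))
        rw [Radford.mulRepr_sum (Radford.glRepr hbinvgl) (rv1 i)
          (fun l r => HopfAlgebra.antipode (R := k) l * r)] at h
        simpa [Radford.glRepr, Bialgebra.counit_mul, hbinvcu] using h
      calc ∑ p ∈ (rv1 i).index,
          Radford.F6 γ β γ' ((rv1 i).left p ⊗ₜ[k] ((rv1 i).right p ⊗ₜ[k] rv.right i))
          = ∑ p ∈ (rv1 i).index,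
            (HopfAlgebra.antipode (R := k) (binv * (rv1 i).left p) * (binv * (rv1 i).right p)) *
              γ' (rv.right i) := by
            refine Finset.sum_congr rfl fun p _ => ?_
            rw [Radford.F6_apply, ← mul_assoc]
            rfl
        _ = (∑ p ∈ (rv1 i).index,
              HopfAlgebra.antipode (R := k) (binv * (rv1 i).left p) * (binv * (rv1 i).right p)) *
              γ' (rv.right i) := by rw [Finset.sum_mul]
        _ = Coalgebra.counit (R := k) (rv.left i) • γ' (rv.right i) := by
            rw [collapse, smul_mul_assoc, one_mul]
    rw [Finset.sum_congr rfl hi]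
    calc ∑ x ∈ rv.index, Coalgebra.counit (R := k) (rv.left x) • γ' (rv.right x)
        = γ' (∑ x ∈ rv.index, Coalgebra.counit (R := k) (rv.left x) • rv.right x) := by
          rw [map_sum]
          exact Finset.sum_congr rfl fun x _ => (map_smul γ' _ _).symm
      _ = HopfAlgebra.antipode (R := k) a * b := by
          rw [Radford.sum_counit_smul_right rv]
          rfl
  have e2 : ∑ i ∈ rv.index, ∑ p ∈ (rv2 i).index,
      Radford.F6 γ β γ' (rv.left i ⊗ₜ[k] ((rv2 i).left p ⊗ₜ[k] (rv2 i).right p)) =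
      HopfAlgebra.antipode (R := k) (binv * a) := by
    have hi : ∀ i ∈ rv.index, ∑ p ∈ (rv2 i).index,
        Radford.F6 γ β γ' (rv.left i ⊗ₜ[k] ((rv2 i).left p ⊗ₜ[k] (rv2 i).right p)) =
        Coalgebra.counit (R := k) (rv.right i) • γ (rv.left i) := by
      intro i _
      have collapse : ∑ p ∈ (rv2 i).index, β ((rv2 i).left p) * γ' ((rv2 i).right p)
          = Coalgebra.counit (R := k) (rv.right i) • 1 := by
        calc ∑ p ∈ (rv2 i).index, β ((rv2 i).left p) * γ' ((rv2 i).right p)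
            = ∑ p ∈ (rv2 i).index, binv *
              (((rv2 i).left p * HopfAlgebra.antipode (R := k) ((rv2 i).right p)) * b) := by
              refine Finset.sum_congr rfl fun p _ => ?_
              show (binv * (rv2 i).left p) *
                (HopfAlgebra.antipode (R := k) ((rv2 i).right p) * b) = _
              simp only [mul_assoc]
          _ = binv * ((∑ p ∈ (rv2 i).index,
                (rv2 i).left p * HopfAlgebra.antipode (R := k) ((rv2 i).right p)) * b) := by
              rw [← Finset.mul_sum, ← Finset.sum_mul]
          _ = Coalgebra.counit (R := k) (rv.right i) • 1 := by
              rw [HopfAlgebra.sum_mul_antipode_eq_smul (rv2 i), smul_mul_assoc, one_mul,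
                mul_smul_comm, hb2]
      calc ∑ p ∈ (rv2 i).index,
          Radford.F6 γ β γ' (rv.left i ⊗ₜ[k] ((rv2 i).left p ⊗ₜ[k] (rv2 i).right p))
          = ∑ p ∈ (rv2 i).index, γ (rv.left i) * (β ((rv2 i).left p) * γ' ((rv2 i).right p)) := by
            refine Finset.sum_congr rfl fun p _ => ?_
            rw [Radford.F6_apply]
        _ = γ (rv.left i) * ∑ p ∈ (rv2 i).index, β ((rv2 i).left p) * γ' ((rv2 i).right p) := by
            rw [Finset.mul_sum]
        _ = Coalgebra.counit (R := k) (rv.right i) • γ (rv.left i) := by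
            rw [collapse, mul_smul_comm, mul_one]
    rw [Finset.sum_congr rfl hi]
    calc ∑ x ∈ rv.index, Coalgebra.counit (R := k) (rv.right x) • γ (rv.left x)
        = γ (∑ x ∈ rv.index, Coalgebra.counit (R := k) (rv.right x) • rv.left x) := by
          rw [map_sum]
          exact Finset.sum_congr rfl fun x _ => (map_smul γ _ _).symm
      _ = HopfAlgebra.antipode (R := k) (binv * a) := by
          rw [Radford.sum_counit_smul_left rv]
          rfl
  rw [← e2, ← etrans, e1]

noncomputable def Radford.RA (g : H →ₗ[k] k) : H →ₗ[k] H :=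
  (TensorProduct.lid k H).toLinearMap ∘ₗ (TensorProduct.map g LinearMap.id) ∘ₗ
    (Coalgebra.comul (R := k))

noncomputable def Radford.LA (g : H →ₗ[k] k) : H →ₗ[k] H :=
  (TensorProduct.rid k H).toLinearMap ∘ₗ (TensorProduct.map LinearMap.id g) ∘ₗ
    (Coalgebra.comul (R := k))

lemma Radford.RA_repr {g : H →ₗ[k] k} {a : H} {ι : Type*} (r : Coalgebra.Repr k a ι) :
    Radford.RA g a = ∑ i ∈ r.index, g (r.left i) • r.right i := by
  have h : Radford.RA g a = (TensorProduct.lid k H) ((TensorProduct.map g LinearMap.id)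
      (∑ i ∈ r.index, r.left i ⊗ₜ[k] r.right i)) := by rw [r.eq]; rfl
  rw [h]
  simp only [map_sum, TensorProduct.map_tmul, TensorProduct.lid_tmul, LinearMap.id_coe, id_eq]

lemma Radford.LA_repr {g : H →ₗ[k] k} {a : H} {ι : Type*} (r : Coalgebra.Repr k a ι) :
    Radford.LA g a = ∑ i ∈ r.index, g (r.right i) • r.left i := by
  have h : Radford.LA g a = (TensorProduct.rid k H) ((TensorProduct.map LinearMap.id g)
      (∑ i ∈ r.index, r.left i ⊗ₜ[k] r.right i)) := by rw [r.eq]; rfl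
  rw [h]
  simp only [map_sum, TensorProduct.map_tmul, TensorProduct.rid_tmul, LinearMap.id_coe, id_eq]

noncomputable def Radford.F3 (g h : H →ₗ[k] k) : H ⊗[k] (H ⊗[k] H) →ₗ[k] H :=
  (TensorProduct.lid k H).toLinearMap ∘ₗ
    TensorProduct.map g ((TensorProduct.lid k H).toLinearMap ∘ₗ
      TensorProduct.map h LinearMap.id)

lemma Radford.F3_apply (g h : H →ₗ[k] k) (u v w : H) :
    Radford.F3 g h (u ⊗ₜ[k] (v ⊗ₜ[k] w)) = g u • (h v • w) := by
  simp [Radford.F3, smul_smul, mul_comm]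

noncomputable def Radford.F5 (g h : H →ₗ[k] k) : H ⊗[k] (H ⊗[k] H) →ₗ[k] H :=
  (TensorProduct.rid k H).toLinearMap ∘ₗ
    TensorProduct.map LinearMap.id ((LinearMap.mul' k k) ∘ₗ TensorProduct.map g h)

lemma Radford.F5_apply (g h : H →ₗ[k] k) (u v w : H) :
    Radford.F5 g h (u ⊗ₜ[k] (v ⊗ₜ[k] w)) = (g v * h w) • u := by
  simp [Radford.F5, TensorProduct.rid_tmul]

lemma Radford.RA_inv_comp (m : H →ₗ[k] k)
    (hmmul : ∀ u v : H, m (u * v) = m u * m v) (hm1 : m 1 = 1) (a : H) :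
    Radford.RA (m ∘ₗ HopfAlgebra.antipode (R := k)) (Radford.RA m a) = a := by
  classical
  set rv : Coalgebra.Repr k a (H × H) := Coalgebra.Repr.arbitrary k a with hrv
  set rv1 : (i : H × H) → Coalgebra.Repr k (rv.left i) (H × H) :=
    fun i => Coalgebra.Repr.arbitrary k (rv.left i) with hrv1
  set rv2 : (i : H × H) → Coalgebra.Repr k (rv.right i) (H × H) :=
    fun i => Coalgebra.Repr.arbitrary k (rv.right i) with hrv2
  have expand : Radford.RA (m ∘ₗ HopfAlgebra.antipode (R := k)) (Radford.RA m a)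
      = ∑ i ∈ rv.index, ∑ p ∈ (rv2 i).index,
        Radford.F3 m (m ∘ₗ HopfAlgebra.antipode (R := k))
          (rv.left i ⊗ₜ[k] ((rv2 i).left p ⊗ₜ[k] (rv2 i).right p)) := by
    rw [Radford.RA_repr rv, map_sum]
    refine Finset.sum_congr rfl fun i _ => ?_
    rw [map_smul, Radford.RA_repr (rv2 i), Finset.smul_sum]
    refine Finset.sum_congr rfl fun p _ => ?_
    rw [Radford.F3_apply]
  rw [expand, ← Radford.triple_eq rv rv1 rv2 (Radford.F3 m (m ∘ₗ HopfAlgebra.antipode (R := k)))]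
  have hi : ∀ i ∈ rv.index, ∑ p ∈ (rv1 i).index,
      Radford.F3 m (m ∘ₗ HopfAlgebra.antipode (R := k))
        ((rv1 i).left p ⊗ₜ[k] ((rv1 i).right p ⊗ₜ[k] rv.right i)) =
      Coalgebra.counit (R := k) (rv.left i) • rv.right i := by
    intro i _
    have hsum : ∑ p ∈ (rv1 i).index,
        m ((rv1 i).left p * HopfAlgebra.antipode (R := k) ((rv1 i).right p))
          = Coalgebra.counit (R := k) (rv.left i) := by
      rw [← map_sum, HopfAlgebra.sum_mul_antipode_eq_smul (rv1 i), map_smul, hm1, smul_eq_mul,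
        mul_one]
    calc ∑ p ∈ (rv1 i).index,
        Radford.F3 m (m ∘ₗ HopfAlgebra.antipode (R := k))
          ((rv1 i).left p ⊗ₜ[k] ((rv1 i).right p ⊗ₜ[k] rv.right i))
        = ∑ p ∈ (rv1 i).index,
          m ((rv1 i).left p * HopfAlgebra.antipode (R := k) ((rv1 i).right p)) • rv.right i := by
          refine Finset.sum_congr rfl fun p _ => ?_
          rw [Radford.F3_apply, smul_smul, LinearMap.comp_apply, ← hmmul]
      _ = Coalgebra.counit (R := k) (rv.left i) • rv.right i := by
          rw [← Finset.sum_smul, hsum]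
  rw [Finset.sum_congr rfl hi, Radford.sum_counit_smul_right rv]

lemma Radford.RA_comp_inv (m : H →ₗ[k] k)
    (hmmul : ∀ u v : H, m (u * v) = m u * m v) (hm1 : m 1 = 1) (a : H) :
    Radford.RA m (Radford.RA (m ∘ₗ HopfAlgebra.antipode (R := k)) a) = a := by
  classical
  set rv : Coalgebra.Repr k a (H × H) := Coalgebra.Repr.arbitrary k a with hrv
  set rv1 : (i : H × H) → Coalgebra.Repr k (rv.left i) (H × H) :=
    fun i => Coalgebra.Repr.arbitrary k (rv.left i) with hrv1
  set rv2 : (i : H × H) → Coalgebra.Repr k (rv.right i) (H × H) :=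
    fun i => Coalgebra.Repr.arbitrary k (rv.right i) with hrv2
  have expand : Radford.RA m (Radford.RA (m ∘ₗ HopfAlgebra.antipode (R := k)) a)
      = ∑ i ∈ rv.index, ∑ p ∈ (rv2 i).index,
        Radford.F3 (m ∘ₗ HopfAlgebra.antipode (R := k)) m
          (rv.left i ⊗ₜ[k] ((rv2 i).left p ⊗ₜ[k] (rv2 i).right p)) := by
    rw [Radford.RA_repr rv, map_sum]
    refine Finset.sum_congr rfl fun i _ => ?_
    rw [map_smul, Radford.RA_repr (rv2 i), Finset.smul_sum]
    refine Finset.sum_congr rfl fun p _ => ?_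
    rw [Radford.F3_apply]
  rw [expand, ← Radford.triple_eq rv rv1 rv2 (Radford.F3 (m ∘ₗ HopfAlgebra.antipode (R := k)) m)]
  have hi : ∀ i ∈ rv.index, ∑ p ∈ (rv1 i).index,
      Radford.F3 (m ∘ₗ HopfAlgebra.antipode (R := k)) m
        ((rv1 i).left p ⊗ₜ[k] ((rv1 i).right p ⊗ₜ[k] rv.right i)) =
      Coalgebra.counit (R := k) (rv.left i) • rv.right i := by
    intro i _
    have hsum : ∑ p ∈ (rv1 i).index,
        m (HopfAlgebra.antipode (R := k) ((rv1 i).left p) * (rv1 i).right p)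
          = Coalgebra.counit (R := k) (rv.left i) := by
      rw [← map_sum, HopfAlgebra.sum_antipode_mul_eq_smul (rv1 i), map_smul, hm1, smul_eq_mul,
        mul_one]
    calc ∑ p ∈ (rv1 i).index,
        Radford.F3 (m ∘ₗ HopfAlgebra.antipode (R := k)) m
          ((rv1 i).left p ⊗ₜ[k] ((rv1 i).right p ⊗ₜ[k] rv.right i))
        = ∑ p ∈ (rv1 i).index,
          m (HopfAlgebra.antipode (R := k) ((rv1 i).left p) * (rv1 i).right p) • rv.right i := by
          refine Finset.sum_congr rfl fun p _ => ?_
          rw [Radford.F3_apply, smul_smul, LinearMap.comp_apply, ← hmmul]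
      _ = Coalgebra.counit (R := k) (rv.left i) • rv.right i := by
          rw [← Finset.sum_smul, hsum]
  rw [Finset.sum_congr rfl hi, Radford.sum_counit_smul_right rv]

lemma Radford.LA_comp_inv (m : H →ₗ[k] k)
    (hmmul : ∀ u v : H, m (u * v) = m u * m v) (hm1 : m 1 = 1) (a : H) :
    Radford.LA m (Radford.LA (m ∘ₗ HopfAlgebra.antipode (R := k)) a) = a := by
  classical
  set rv : Coalgebra.Repr k a (H × H) := Coalgebra.Repr.arbitrary k a with hrv
  set rv1 : (i : H × H) → Coalgebra.Repr k (rv.left i) (H × H) :=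
    fun i => Coalgebra.Repr.arbitrary k (rv.left i) with hrv1
  set rv2 : (i : H × H) → Coalgebra.Repr k (rv.right i) (H × H) :=
    fun i => Coalgebra.Repr.arbitrary k (rv.right i) with hrv2
  have expand : Radford.LA m (Radford.LA (m ∘ₗ HopfAlgebra.antipode (R := k)) a)
      = ∑ i ∈ rv.index, ∑ p ∈ (rv1 i).index,
        Radford.F5 m (m ∘ₗ HopfAlgebra.antipode (R := k))
          ((rv1 i).left p ⊗ₜ[k] ((rv1 i).right p ⊗ₜ[k] rv.right i)) := by
    rw [Radford.LA_repr rv, map_sum]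
    refine Finset.sum_congr rfl fun i _ => ?_
    rw [map_smul, Radford.LA_repr (rv1 i), Finset.smul_sum]
    refine Finset.sum_congr rfl fun p _ => ?_
    rw [Radford.F5_apply, smul_smul, mul_comm]
  rw [expand, Radford.triple_eq rv rv1 rv2 (Radford.F5 m (m ∘ₗ HopfAlgebra.antipode (R := k)))]
  have hi : ∀ i ∈ rv.index, ∑ p ∈ (rv2 i).index,
      Radford.F5 m (m ∘ₗ HopfAlgebra.antipode (R := k))
        (rv.left i ⊗ₜ[k] ((rv2 i).left p ⊗ₜ[k] (rv2 i).right p)) =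
      Coalgebra.counit (R := k) (rv.right i) • rv.left i := by
    intro i _
    have hsum : ∑ p ∈ (rv2 i).index,
        m ((rv2 i).left p * HopfAlgebra.antipode (R := k) ((rv2 i).right p))
          = Coalgebra.counit (R := k) (rv.right i) := by
      rw [← map_sum, HopfAlgebra.sum_mul_antipode_eq_smul (rv2 i), map_smul, hm1, smul_eq_mul,
        mul_one]
    calc ∑ p ∈ (rv2 i).index,
        Radford.F5 m (m ∘ₗ HopfAlgebra.antipode (R := k))
          (rv.left i ⊗ₜ[k] ((rv2 i).left p ⊗ₜ[k] (rv2 i).right p))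
        = ∑ p ∈ (rv2 i).index,
          m ((rv2 i).left p * HopfAlgebra.antipode (R := k) ((rv2 i).right p)) • rv.left i := by
          refine Finset.sum_congr rfl fun p _ => ?_
          rw [Radford.F5_apply, LinearMap.comp_apply, ← hmmul]
      _ = Coalgebra.counit (R := k) (rv.right i) • rv.left i := by
          rw [← Finset.sum_smul, hsum]
  rw [Finset.sum_congr rfl hi, Radford.sum_counit_smul_left rv]

lemma Radford.transfer1 (f : H →ₗ[k] k)
    (sepL : ∀ {c c' : H}, (∀ z, f (c * z) = f (c' * z)) → c = c')
    {ι : Type*} (s : Finset ι) (u v : ι → H)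
    (hyp : ∀ c, ∑ j ∈ s, f (v j * c) • u j = c) :
    ∀ a, ∑ j ∈ s, f (a * u j) • v j = a := by
  intro a
  apply sepL
  intro z
  have hz : f (a * z) = ∑ j ∈ s, f (v j * z) * f (a * u j) := by
    conv_lhs => rw [← hyp z]
    rw [Finset.mul_sum, map_sum]
    refine Finset.sum_congr rfl fun j _ => ?_
    rw [mul_smul_comm, map_smul, smul_eq_mul, mul_comm]
  rw [hz, Finset.sum_mul, map_sum]
  refine Finset.sum_congr rfl fun j _ => ?_
  rw [smul_mul_assoc, map_smul, smul_eq_mul, mul_comm]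

lemma Radford.transfer2 (f : H →ₗ[k] k)
    (sepR : ∀ {c c' : H}, (∀ z, f (z * c) = f (z * c')) → c = c')
    {ι : Type*} (s : Finset ι) (u v : ι → H)
    (hyp : ∀ c, ∑ j ∈ s, f (c * u j) • v j = c) :
    ∀ a, ∑ j ∈ s, f (v j * a) • u j = a := by
  intro a
  apply sepR
  intro z
  have hz : f (z * a) = ∑ j ∈ s, f (z * u j) * f (v j * a) := by
    conv_lhs => rw [← hyp z]
    rw [Finset.sum_mul, map_sum]
    refine Finset.sum_congr rfl fun j _ => ?_
    rw [smul_mul_assoc, map_smul, smul_eq_mul]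
  rw [hz, Finset.mul_sum, map_sum]
  refine Finset.sum_congr rfl fun j _ => ?_
  rw [mul_smul_comm, map_smul, smul_eq_mul, mul_comm]

end RadfordHelpers

/-- Radford's formula for the fourth power of the antipode of an FH-algebra `H` over a
commutative ring `k`: with right modular function `m a = f (a * t)` (the right distinguished
group-like of `H*`), its convolution inverse `m⁻¹ = m ∘ S`, and right distinguished group-like
element `b ∈ H`, one has `S⁴(a) = b (m⁻¹ ⇀ a ↼ m) b⁻¹` for all `a ∈ H`. -/
theorem stmt_9 (k : Type*) [CommRing k] (H : Type*) [Ring H] [HopfAlgebra k H]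
    (hfin : Module.Finite k H) (hproj : Module.Projective k H)
    (f : H →ₗ[k] k) (nn : ℕ) (x y : Fin nn → H) (hsys : IsFrobeniusSystem k H f x y)
    (hri : ∀ a : H,
      (TensorProduct.lid k H) ((TensorProduct.map f LinearMap.id) (Coalgebra.comul (R := k) a))
        = f a • (1 : H))
    (t : H) (ht : ∀ a : H, f (t * a) = Coalgebra.counit (R := k) a) (hft : f t = 1)
    (m : H →ₗ[k] k) (hm : ∀ a : H, m a = f (a * t))
    (b binv : H) (hb1 : b * binv = 1) (hb2 : binv * b = 1)
    (hbgl : Coalgebra.comul (R := k) b = b ⊗ₜ[k] b) (hbcu : Coalgebra.counit (R := k) b = 1)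
    (hbdist : ∀ (g : H →ₗ[k] k) (c : H), (conv k H g f) c = g b * f c) :
    ∀ a : H,
      HopfAlgebra.antipode (R := k) (HopfAlgebra.antipode (R := k)
        (HopfAlgebra.antipode (R := k) (HopfAlgebra.antipode (R := k) a))) =
      b * rAct k H m (lAct k H (m ∘ₗ HopfAlgebra.antipode (R := k)) a) * binv := by
  classical
  have hfy : ∀ c : H, ∑ i, f (y i * c) • x i = c := fun c => (hsys c).1
  have hfx : ∀ c : H, ∑ i, f (c * x i) • y i = c := fun c => (hsys c).2
  have sepL : ∀ {c c' : H}, (∀ z, f (c * z) = f (c' * z)) → c = c' := by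
    intro c c' h
    rw [← hfx c, ← hfx c']
    exact Finset.sum_congr rfl fun i _ => by rw [h]
  have sepR : ∀ {c c' : H}, (∀ z, f (z * c) = f (z * c')) → c = c' := by
    intro c c' h
    rw [← hfy c, ← hfy c']
    exact Finset.sum_congr rfl fun i _ => by rw [h]
  have htr : ∀ c : H, t * c = Coalgebra.counit (R := k) c • t := by
    intro c; apply sepL; intro z
    rw [mul_assoc, ht, smul_mul_assoc, map_smul, ht, Bialgebra.counit_mul, smul_eq_mul]
  have hmt : ∀ c : H, c * t = m c • t := by
    intro c; apply sepL; intro z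
    rw [mul_assoc, htr z, mul_smul_comm, map_smul, smul_mul_assoc, map_smul, ht, ← hm,
      smul_eq_mul, smul_eq_mul, mul_comm]
  have hm1 : m 1 = 1 := by rw [hm, one_mul, hft]
  have hmmul : ∀ u v : H, m (u * v) = m u * m v := by
    intro u v
    rw [hm, mul_assoc, hmt v, mul_smul_comm, map_smul, ← hm, smul_eq_mul, mul_comm]
  have hcounit_binv : Coalgebra.counit (R := k) binv = 1 := by
    have h := Bialgebra.counit_mul (R := k) b binv
    rw [hb1, Bialgebra.counit_one, hbcu, one_mul] at h
    exact h.symm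
  have hcomul_binv : Coalgebra.comul (R := k) binv = binv ⊗ₜ[k] binv := by
    have h1 : (binv ⊗ₜ[k] binv) * (b ⊗ₜ[k] b) = (1 : H ⊗[k] H) := by
      rw [Algebra.TensorProduct.tmul_mul_tmul, hb2, Algebra.TensorProduct.one_def]
    calc Coalgebra.comul (R := k) binv
        = ((binv ⊗ₜ[k] binv) * (b ⊗ₜ[k] b)) * Coalgebra.comul (R := k) binv := by
          rw [h1, one_mul]
      _ = (binv ⊗ₜ[k] binv) * (Coalgebra.comul (R := k) b * Coalgebra.comul (R := k) binv) := by
          rw [mul_assoc, hbgl]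
      _ = (binv ⊗ₜ[k] binv) * Coalgebra.comul (R := k) (b * binv) := by
          rw [Bialgebra.comul_mul]
      _ = binv ⊗ₜ[k] binv := by rw [hb1, Bialgebra.comul_one, mul_one]
  have hSb2 : HopfAlgebra.antipode (R := k) b * b = 1 := by
    have h := HopfAlgebra.sum_antipode_mul_eq_smul (R := k) (Radford.glRepr hbgl)
    simpa [Radford.glRepr, hbcu] using h
  have hSbinv2 : HopfAlgebra.antipode (R := k) binv * binv = 1 := by
    have h := HopfAlgebra.sum_antipode_mul_eq_smul (R := k) (Radford.glRepr hcomul_binv)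
    simpa [Radford.glRepr, hcounit_binv] using h
  have rt : Coalgebra.Repr k t (H × H) := Coalgebra.Repr.arbitrary k t
  have hB : ∀ yy : H, ∑ i ∈ rt.index, f (rt.left i * yy) • rt.right i = HopfAlgebra.antipode (R := k) yy := by
    intro yy
    have ry : Coalgebra.Repr k yy (H × H) := Coalgebra.Repr.arbitrary k yy
    rw [Radford.lemA f hri t yy rt ry]
    calc ∑ j ∈ ry.index, f (t * ry.left j) • HopfAlgebra.antipode (R := k) (ry.right j)
        = ∑ j ∈ ry.index, Coalgebra.counit (R := k) (ry.left j) • HopfAlgebra.antipode (R := k) (ry.right j) := by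
          refine Finset.sum_congr rfl fun j _ => ?_
          rw [ht]
      _ = HopfAlgebra.antipode (R := k) (∑ j ∈ ry.index, Coalgebra.counit (R := k) (ry.left j) • ry.right j) := by
          rw [map_sum]
          exact Finset.sum_congr rfl fun j _ => (map_smul _ _ _).symm
      _ = HopfAlgebra.antipode (R := k) yy := by rw [Radford.sum_counit_smul_right ry]
  have hE : ∀ yy : H,
      (∑ i ∈ rt.index, f (rt.right i * yy) • HopfAlgebra.antipode (R := k) (rt.left i)) * b = yy := by
    intro yy
    have ry : Coalgebra.Repr k yy (H × H) := Coalgebra.Repr.arbitrary k yy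
    have h := Radford.lemD f b sepR hbdist t yy rt ry
    rw [← h]
    calc ∑ j ∈ ry.index, f (t * ry.right j) • ry.left j
        = ∑ j ∈ ry.index, Coalgebra.counit (R := k) (ry.right j) • ry.left j := by
          refine Finset.sum_congr rfl fun j _ => ?_
          rw [ht]
      _ = yy := Radford.sum_counit_smul_left ry
  have hK : ∀ xx : H, Radford.RA m xx
      = ∑ j ∈ rt.index, f (xx * rt.left j) • HopfAlgebra.antipode (R := k) (rt.right j) := by
    intro xx
    have rx : Coalgebra.Repr k xx (H × H) := Coalgebra.Repr.arbitrary k xx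
    have h := Radford.lemA f hri xx t rx rt
    rw [← h, Radford.RA_repr rx]
    refine Finset.sum_congr rfl fun i _ => ?_
    rw [hm]
  have hL : ∀ xx : H, ∑ j ∈ rt.index, f (xx * rt.right j) • rt.left j
      = HopfAlgebra.antipode (R := k) (Radford.LA m xx) * b := by
    intro xx
    have rx : Coalgebra.Repr k xx (H × H) := Coalgebra.Repr.arbitrary k xx
    have h := Radford.lemD f b sepR hbdist xx t rx rt
    rw [h]
    congr 1
    calc ∑ i ∈ rx.index, f (rx.right i * t) • HopfAlgebra.antipode (R := k) (rx.left i)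
        = ∑ i ∈ rx.index, m (rx.right i) • HopfAlgebra.antipode (R := k) (rx.left i) := by
          refine Finset.sum_congr rfl fun i _ => ?_
          rw [← hm]
      _ = HopfAlgebra.antipode (R := k) (∑ i ∈ rx.index, m (rx.right i) • rx.left i) := by
          rw [map_sum]
          exact Finset.sum_congr rfl fun i _ => (map_smul _ _ _).symm
      _ = HopfAlgebra.antipode (R := k) (Radford.LA m xx) := by rw [← Radford.LA_repr rx]
  have hTA : ∀ aa : H, ∑ j ∈ rt.index,
      f (aa * (HopfAlgebra.antipode (R := k) (rt.left j) * b)) • rt.right j = aa := by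
    refine Radford.transfer1 f sepL rt.index
      (fun j => HopfAlgebra.antipode (R := k) (rt.left j) * b) (fun j => rt.right j) ?_
    intro c
    conv_rhs => rw [← hE c]
    rw [Finset.sum_mul]
    exact Finset.sum_congr rfl fun j _ => (smul_mul_assoc _ _ _).symm
  have hTB0 : ∀ c : H, ∑ j ∈ rt.index,
      f (c * rt.left j) • Radford.RA (m ∘ₗ HopfAlgebra.antipode (R := k)) (HopfAlgebra.antipode (R := k) (rt.right j)) = c := by
    intro c
    conv_rhs => rw [← Radford.RA_inv_comp m hmmul hm1 c]
    rw [hK c, map_sum]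
    exact Finset.sum_congr rfl fun j _ => (map_smul _ _ _).symm
  have hTB : ∀ aa : H, ∑ j ∈ rt.index,
      f (Radford.RA (m ∘ₗ HopfAlgebra.antipode (R := k)) (HopfAlgebra.antipode (R := k) (rt.right j)) * aa) • rt.left j = aa :=
    Radford.transfer2 f sepR rt.index (fun j => rt.left j)
      (fun j => Radford.RA (m ∘ₗ HopfAlgebra.antipode (R := k)) (HopfAlgebra.antipode (R := k) (rt.right j))) hTB0
  have hnu : ∀ xx : H, ∑ j ∈ rt.index, f (xx * rt.right j) • (HopfAlgebra.antipode (R := k) (rt.left j) * b)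
      = HopfAlgebra.antipode (R := k) (HopfAlgebra.antipode (R := k) (Radford.LA m xx) * b) * b := by
    intro xx
    calc ∑ j ∈ rt.index, f (xx * rt.right j) • (HopfAlgebra.antipode (R := k) (rt.left j) * b)
        = (∑ j ∈ rt.index, f (xx * rt.right j) • HopfAlgebra.antipode (R := k) (rt.left j)) * b := by
          rw [Finset.sum_mul]
          exact Finset.sum_congr rfl fun j _ => (smul_mul_assoc _ _ _).symm
      _ = HopfAlgebra.antipode (R := k) (∑ j ∈ rt.index, f (xx * rt.right j) • rt.left j) * b := by
          congr 1
          rw [map_sum]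
          exact Finset.sum_congr rfl fun j _ => (map_smul _ _ _).symm
      _ = HopfAlgebra.antipode (R := k) (HopfAlgebra.antipode (R := k) (Radford.LA m xx) * b) * b := by rw [hL xx]
  have hnu' : ∀ yy : H, ∑ j ∈ rt.index,
      f (rt.left j * yy) • Radford.RA (m ∘ₗ HopfAlgebra.antipode (R := k)) (HopfAlgebra.antipode (R := k) (rt.right j))
      = Radford.RA (m ∘ₗ HopfAlgebra.antipode (R := k)) (HopfAlgebra.antipode (R := k) (HopfAlgebra.antipode (R := k) yy)) := by
    intro yy
    calc ∑ j ∈ rt.index, f (rt.left j * yy) • Radford.RA (m ∘ₗ HopfAlgebra.antipode (R := k)) (HopfAlgebra.antipode (R := k) (rt.right j))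
        = Radford.RA (m ∘ₗ HopfAlgebra.antipode (R := k))
            (HopfAlgebra.antipode (R := k) (∑ j ∈ rt.index, f (rt.left j * yy) • rt.right j)) := by
          rw [map_sum, map_sum]
          exact Finset.sum_congr rfl fun j _ => by rw [map_smul, map_smul]
      _ = Radford.RA (m ∘ₗ HopfAlgebra.antipode (R := k)) (HopfAlgebra.antipode (R := k) (HopfAlgebra.antipode (R := k) yy)) := by rw [hB yy]
  have h16 : ∀ xx yy : H,
      f (xx * yy) = f (yy * (HopfAlgebra.antipode (R := k) (HopfAlgebra.antipode (R := k) (Radford.LA m xx) * b) * b)) := by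
    intro xx yy
    conv_lhs => rw [← hTA yy]
    conv_rhs => rw [← hnu xx]
    rw [Finset.mul_sum, map_sum, Finset.mul_sum, map_sum]
    refine Finset.sum_congr rfl fun j _ => ?_
    rw [mul_smul_comm, map_smul, mul_smul_comm, map_smul, smul_eq_mul, smul_eq_mul, mul_comm]
  have h17 : ∀ xx yy : H,
      f (xx * yy) = f (Radford.RA (m ∘ₗ HopfAlgebra.antipode (R := k)) (HopfAlgebra.antipode (R := k) (HopfAlgebra.antipode (R := k) yy)) * xx) := by
    intro xx yy
    conv_lhs => rw [← hTB xx]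
    conv_rhs => rw [← hnu' yy]
    rw [Finset.sum_mul, map_sum, Finset.sum_mul, map_sum]
    refine Finset.sum_congr rfl fun j _ => ?_
    rw [smul_mul_assoc, map_smul, smul_mul_assoc, map_smul, smul_eq_mul, smul_eq_mul, mul_comm]
  have hMain : ∀ xx : H,
      HopfAlgebra.antipode (R := k) (HopfAlgebra.antipode (R := k) (HopfAlgebra.antipode (R := k) (HopfAlgebra.antipode (R := k) (Radford.LA m xx)))) = b * Radford.RA m xx * binv := by
    intro xx
    have hstep1 : Radford.RA (m ∘ₗ HopfAlgebra.antipode (R := k))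
        (HopfAlgebra.antipode (R := k) (HopfAlgebra.antipode (R := k) (HopfAlgebra.antipode (R := k) (HopfAlgebra.antipode (R := k) (Radford.LA m xx) * b) * b))) = xx := by
      apply sepL
      intro z
      have e1 := h16 xx z
      have e2 := h17 z (HopfAlgebra.antipode (R := k) (HopfAlgebra.antipode (R := k) (Radford.LA m xx) * b) * b)
      exact (e1.trans e2).symm
    have hSS : HopfAlgebra.antipode (R := k) (HopfAlgebra.antipode (R := k) (HopfAlgebra.antipode (R := k) (HopfAlgebra.antipode (R := k) (Radford.LA m xx) * b) * b))
        = binv * HopfAlgebra.antipode (R := k) (HopfAlgebra.antipode (R := k) (HopfAlgebra.antipode (R := k) (HopfAlgebra.antipode (R := k) (Radford.LA m xx)))) * b := by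
      have s1 : HopfAlgebra.antipode (R := k) (HopfAlgebra.antipode (R := k) (Radford.LA m xx) * b)
          = binv * HopfAlgebra.antipode (R := k) (HopfAlgebra.antipode (R := k) (Radford.LA m xx)) :=
        Radford.lem21a b binv hb1 hbgl hbcu _
      have hSnu : HopfAlgebra.antipode (R := k) (HopfAlgebra.antipode (R := k) (HopfAlgebra.antipode (R := k) (Radford.LA m xx) * b) * b)
          = binv * (HopfAlgebra.antipode (R := k) (HopfAlgebra.antipode (R := k) (HopfAlgebra.antipode (R := k) (Radford.LA m xx))) * b) := by
        calc HopfAlgebra.antipode (R := k) (HopfAlgebra.antipode (R := k) (HopfAlgebra.antipode (R := k) (Radford.LA m xx) * b) * b)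
            = binv * HopfAlgebra.antipode (R := k) (HopfAlgebra.antipode (R := k) (HopfAlgebra.antipode (R := k) (Radford.LA m xx) * b)) :=
              Radford.lem21a b binv hb1 hbgl hbcu _
          _ = binv * HopfAlgebra.antipode (R := k) (binv * HopfAlgebra.antipode (R := k) (HopfAlgebra.antipode (R := k) (Radford.LA m xx))) := by rw [s1]
          _ = binv * (HopfAlgebra.antipode (R := k) (HopfAlgebra.antipode (R := k) (HopfAlgebra.antipode (R := k) (Radford.LA m xx))) * b) := by
              rw [Radford.lem21b b binv hb2 hcomul_binv hcounit_binv]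
      calc HopfAlgebra.antipode (R := k) (HopfAlgebra.antipode (R := k) (HopfAlgebra.antipode (R := k) (HopfAlgebra.antipode (R := k) (Radford.LA m xx) * b) * b))
          = HopfAlgebra.antipode (R := k) (binv * (HopfAlgebra.antipode (R := k) (HopfAlgebra.antipode (R := k) (HopfAlgebra.antipode (R := k) (Radford.LA m xx))) * b)) := by rw [hSnu]
        _ = HopfAlgebra.antipode (R := k) (HopfAlgebra.antipode (R := k) (HopfAlgebra.antipode (R := k) (HopfAlgebra.antipode (R := k) (Radford.LA m xx))) * b) * b :=
            Radford.lem21b b binv hb2 hcomul_binv hcounit_binv _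
        _ = (binv * HopfAlgebra.antipode (R := k) (HopfAlgebra.antipode (R := k) (HopfAlgebra.antipode (R := k) (HopfAlgebra.antipode (R := k) (Radford.LA m xx))))) * b := by
            rw [Radford.lem21a b binv hb1 hbgl hbcu]
    have hstep2 : binv * HopfAlgebra.antipode (R := k) (HopfAlgebra.antipode (R := k) (HopfAlgebra.antipode (R := k) (HopfAlgebra.antipode (R := k) (Radford.LA m xx)))) * b
        = Radford.RA m xx := by
      have h2 := congrArg (Radford.RA m) hstep1
      rw [Radford.RA_comp_inv m hmmul hm1, hSS] at h2
      exact h2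
    calc HopfAlgebra.antipode (R := k) (HopfAlgebra.antipode (R := k) (HopfAlgebra.antipode (R := k) (HopfAlgebra.antipode (R := k) (Radford.LA m xx))))
        = (b * binv) * HopfAlgebra.antipode (R := k) (HopfAlgebra.antipode (R := k) (HopfAlgebra.antipode (R := k) (HopfAlgebra.antipode (R := k) (Radford.LA m xx)))) * (b * binv) := by
          rw [hb1, one_mul, mul_one]
      _ = b * (binv * HopfAlgebra.antipode (R := k) (HopfAlgebra.antipode (R := k) (HopfAlgebra.antipode (R := k) (HopfAlgebra.antipode (R := k) (Radford.LA m xx)))) * b) * binv := by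
          simp only [mul_assoc]
      _ = b * Radford.RA m xx * binv := by rw [hstep2]
  intro a
  have hgoal := hMain (Radford.LA (m ∘ₗ HopfAlgebra.antipode (R := k)) a)
  rw [Radford.LA_comp_inv m hmmul hm1 a] at hgoal
  exact hgoal
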